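/- Let q ≥ 2, and let f : ℕ → {0,1} be a multiplicative q-automatic function such that the set P̂₁ = {p prime : f(p^e) = 1 for some e ≥ 1} is infinite. For a prime p coprime to q and δ ≥ 1, let α_{p,δ} be the exact power of q dividing p^{δφ(q)} − 1, and for p ∈ P̂₁ coprime to q let α_p = min{α_{p,δ} : δ ≥ 1, f(p^δ) = 1}. Then there exists α ∈ ℕ such that the set {p ∈ P̂₁ : gcd(p,q) = 1 and α_p = α} is infinite. -/

import Mathlib

/-- The `q`-kernel of `f`: the set of sequences `n ↦ f (q^i n + r)` over integers
`i ≥ 1` and `0 ≤ r ≤ q^i - 1`. -/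
def qKernel (q : ℕ) (f : ℕ → ℂ) : Set (ℕ → ℂ) :=
  {g | ∃ i r : ℕ, 1 ≤ i ∧ r ≤ q ^ i - 1 ∧ g = fun n => f (q ^ i * n + r)}

/-- `f` is `q`-automatic if its `q`-kernel is finite. -/
def IsQAutomatic (q : ℕ) (f : ℕ → ℂ) : Prop := (qKernel q f).Finite

/-- `alphaP q f p` is the minimum, over `δ ≥ 1` with `f (p^δ) = 1`, of the exact
power of `q` dividing `p^(δ·φ(q)) - 1`. -/
noncomputable def alphaP (q : ℕ) (f : ℕ → ℂ) (p : ℕ) : ℕ :=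
  sInf {a : ℕ | ∃ δ : ℕ, 1 ≤ δ ∧ f (p ^ δ) = 1 ∧
    q ^ a ∣ p ^ (δ * q.totient) - 1 ∧ ¬ q ^ (a + 1) ∣ p ^ (δ * q.totient) - 1}

section Stmt11Aux

lemma fone (q : ℕ) (f : ℕ → ℂ)
    (h01 : ∀ n : ℕ, f n = 0 ∨ f n = 1)
    (hmul : ∀ m n : ℕ, Nat.Coprime m n → f (m * n) = f m * f n)
    (hinf : {p : ℕ | p.Prime ∧ ∃ e : ℕ, 1 ≤ e ∧ f (p ^ e) = 1}.Infinite) : f 1 = 1 := by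
  rcases h01 1 with h | h
  · exfalso
    obtain ⟨p, hp⟩ := hinf.nonempty
    obtain ⟨e, _, hfe⟩ := hp.2
    have h2 := hmul (p ^ e) 1 (Nat.coprime_one_right _)
    rw [mul_one, h, mul_zero] at h2
    rw [h2] at hfe
    exact one_ne_zero hfe.symm
  · exact h

lemma dvd_mul_sub_one {Q a b : ℕ} (ha : 1 ≤ a) (hb : 1 ≤ b)
    (da : Q ∣ a - 1) (db : Q ∣ b - 1) : Q ∣ a * b - 1 := by
  obtain ⟨b', rfl⟩ : ∃ b', b = b' + 1 := ⟨b - 1, by omega⟩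
  have h : a * (b' + 1) - 1 = a * b' + (a - 1) := by
    have h2 : a * (b' + 1) = a * b' + a := by ring
    omega
  rw [h]
  exact dvd_add (Dvd.dvd.mul_left (by simpa using db) a) da

lemma one_add_pow (x k : ℕ) : ∃ E : ℕ, (1 + x) ^ k = 1 + k * x + x ^ 2 * E := by
  induction k with
  | zero => exact ⟨0, by ring⟩
  | succ k ih =>
    obtain ⟨E, hE⟩ := ih
    exact ⟨E + k + x * E, by rw [pow_succ, hE]; ring⟩

lemma extract (q : ℕ) (f : ℕ → ℂ)
    (h01 : ∀ n : ℕ, f n = 0 ∨ f n = 1)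
    (hmul : ∀ m n : ℕ, Nat.Coprime m n → f (m * n) = f m * f n)
    (K : ℕ) :
    ∀ n : ℕ, Nat.Coprime n q → f n = 1 → ¬ (q ^ K ∣ n ^ q.totient - 1) →
      ∃ ℓ v : ℕ, ℓ.Prime ∧ ℓ ∣ n ∧ 1 ≤ v ∧ f (ℓ ^ v) = 1 ∧
        ¬ (q ^ K ∣ ℓ ^ (v * q.totient) - 1) := by
  intro n
  induction n using Nat.strong_induction_on with
  | _ n ih =>
    intro hcop hf1 hnd
    rcases Nat.lt_or_ge n 2 with hn2 | hn2
    · exfalso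
      interval_cases n
      · apply hnd
        have hq1 : q = 1 := by simpa [Nat.coprime_zero_left] using hcop
        simp [hq1]
      · apply hnd
        simp
    have hn0 : n ≠ 0 := by omega
    have hn1 : n ≠ 1 := by omega
    set ℓ := n.minFac with hldef
    have hlp : ℓ.Prime := Nat.minFac_prime hn1
    set v := n.factorization ℓ with hvdef
    have hv : 0 < v := hlp.factorization_pos_of_dvd hn0 (Nat.minFac_dvd n)
    set m := n / ℓ ^ v with hmdef
    have hsplit : ℓ ^ v * m = n := Nat.ordProj_mul_ordCompl_eq_self n ℓ
    have hcopm : Nat.Coprime (ℓ ^ v) m :=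
      Nat.Coprime.pow_left _ (Nat.coprime_ordCompl hlp hn0)
    have hfm : f (ℓ ^ v) * f m = 1 := by rw [← hmul _ _ hcopm, hsplit]; exact hf1
    have hA : f (ℓ ^ v) = 1 := by
      rcases h01 (ℓ ^ v) with h | h
      · rw [h, zero_mul] at hfm; exact absurd hfm (by norm_num)
      · exact h
    have hB : f m = 1 := by
      rw [hA, one_mul] at hfm; exact hfm
    have hmpos : 0 < m := Nat.ordCompl_pos ℓ hn0
    have hpow : n ^ q.totient = ℓ ^ (v * q.totient) * m ^ q.totient := by
      rw [← hsplit, mul_pow, pow_mul]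
    by_cases hAd : q ^ K ∣ ℓ ^ (v * q.totient) - 1
    · by_cases hBd : q ^ K ∣ m ^ q.totient - 1
      · exfalso
        apply hnd
        rw [hpow]
        exact dvd_mul_sub_one (Nat.one_le_iff_ne_zero.2 (pow_ne_zero _ hlp.pos.ne'))
          (Nat.one_le_iff_ne_zero.2 (pow_ne_zero _ hmpos.ne')) hAd hBd
      · have hmlt : m < n := by
          have h2 : 2 ≤ ℓ ^ v := le_trans hlp.two_le (Nat.le_self_pow hv.ne' ℓ)
          calc m < 2 * m := by omega
            _ ≤ ℓ ^ v * m := Nat.mul_le_mul_right m h2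
            _ = n := hsplit
        have hmd : m ∣ n := ⟨ℓ ^ v, by rw [← hsplit]; ring⟩
        obtain ⟨ℓ', v', h1, h2, h3, h4, h5⟩ :=
          ih m hmlt (Nat.Coprime.coprime_dvd_left hmd hcop) hB hBd
        exact ⟨ℓ', v', h1, h2.trans hmd, h3, h4, h5⟩
    · exact ⟨ℓ, v, hlp, Nat.minFac_dvd n, hv, hA, hAd⟩

lemma totient_mul_not_dvd {q c : ℕ} (hq : 2 ≤ q) (hc : 0 < c) (hqc : ¬ q ∣ c) :
    ¬ q ^ (q.totient + q + 2) ∣ q.totient * c := by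
  intro hdvd
  have hq0 : q ≠ 0 := by omega
  have hphi : 0 < q.totient := Nat.totient_pos.mpr (by omega)
  obtain ⟨ℓ, hl⟩ : ∃ ℓ, c.factorization ℓ < q.factorization ℓ := by
    by_contra hcontra
    push_neg at hcontra
    exact hqc ((Nat.factorization_le_iff_dvd hq0 hc.ne').1 (Finsupp.le_def.2 hcontra))
  have hu1 : 0 < q.factorization ℓ := lt_of_le_of_lt (Nat.zero_le _) hl
  have hfle : ((q ^ (q.totient + q + 2)).factorization) ℓ ≤ ((q.totient * c).factorization) ℓ := by
    exact Finsupp.le_def.1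
      ((Nat.factorization_le_iff_dvd (pow_ne_zero _ hq0) (by positivity)).2 hdvd) ℓ
  rw [Nat.factorization_pow, Nat.factorization_mul hphi.ne' hc.ne'] at hfle
  simp only [Finsupp.smul_apply, Finsupp.add_apply, smul_eq_mul] at hfle
  have b1 : q.totient.factorization ℓ ≤ q.totient := le_of_lt (Nat.factorization_lt ℓ hphi.ne')
  have b2 : q.factorization ℓ ≤ q := le_of_lt (Nat.factorization_lt ℓ hq0)
  have b3 : q.totient + q + 2 ≤ (q.totient + q + 2) * q.factorization ℓ :=
    Nat.le_mul_of_pos_right _ hu1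
  have b4 : (q.totient + q + 2) * q.factorization ℓ ≤
      q.totient.factorization ℓ + c.factorization ℓ := hfle
  omega

lemma kernel_rep {q : ℕ} (hq : 2 ≤ q) {f : ℕ → ℂ} (hauto : IsQAutomatic q f) :
    ∃ i₀ d : ℕ, 1 ≤ i₀ ∧ 1 ≤ d ∧
      ∀ D n : ℕ, f (q ^ (i₀ + D * d) * n + 1) = f (q ^ i₀ * n + 1) := by
  have hmaps : Set.MapsTo (fun i : ℕ => (fun n : ℕ => f (q ^ i * n + 1)))
      (Set.Ici 1) (qKernel q f) := by
    intro i hi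
    have h2 : 2 ≤ q ^ i := by
      calc 2 ≤ q := hq
        _ = q ^ 1 := (pow_one q).symm
        _ ≤ q ^ i := Nat.pow_le_pow_right (by omega) hi
    exact ⟨i, 1, hi, by omega, rfl⟩
  obtain ⟨i, hi, j, hj, hne, heq⟩ :=
    (Set.Ici_infinite (1 : ℕ)).exists_ne_map_eq_of_mapsTo hmaps hauto
  obtain ⟨i₀, j₀, hlt, h1, heqf⟩ : ∃ i₀ j₀ : ℕ, i₀ < j₀ ∧ 1 ≤ i₀ ∧
      (fun n : ℕ => f (q ^ i₀ * n + 1)) = (fun n : ℕ => f (q ^ j₀ * n + 1)) := by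
    rcases Ne.lt_or_gt hne with hij | hij
    · exact ⟨i, j, hij, hi, heq⟩
    · exact ⟨j, i, hij, hj, heq.symm⟩
  refine ⟨i₀, j₀ - i₀, h1, by omega, ?_⟩
  intro D
  induction D with
  | zero => intro n; simp
  | succ D ih =>
    intro n
    have e1 : i₀ + (D + 1) * (j₀ - i₀) = (i₀ + D * (j₀ - i₀)) + (j₀ - i₀) := by ring
    calc f (q ^ (i₀ + (D + 1) * (j₀ - i₀)) * n + 1)
        = f (q ^ (i₀ + D * (j₀ - i₀)) * (q ^ (j₀ - i₀) * n) + 1) := by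
          rw [e1, pow_add, mul_assoc]
      _ = f (q ^ i₀ * (q ^ (j₀ - i₀) * n) + 1) := ih (q ^ (j₀ - i₀) * n)
      _ = f (q ^ j₀ * n + 1) := by rw [← mul_assoc, ← pow_add, Nat.add_sub_cancel' (le_of_lt hlt)]
      _ = f (q ^ i₀ * n + 1) := (congrFun heqf n).symm

end Stmt11Aux

theorem stmt_11 (q : ℕ) (hq : 2 ≤ q) (f : ℕ → ℂ)
    (h01 : ∀ n : ℕ, f n = 0 ∨ f n = 1)
    (hmul : ∀ m n : ℕ, Nat.Coprime m n → f (m * n) = f m * f n)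
    (hauto : IsQAutomatic q f)
    (hinf : {p : ℕ | p.Prime ∧ ∃ e : ℕ, 1 ≤ e ∧ f (p ^ e) = 1}.Infinite) :
    ∃ α : ℕ, {p : ℕ | p.Prime ∧ (∃ e : ℕ, 1 ≤ e ∧ f (p ^ e) = 1) ∧
      Nat.Coprime p q ∧ alphaP q f p = α}.Infinite := by
  classical
  by_contra hcon
  push_neg at hcon
  have hfib : ∀ α : ℕ, {p : ℕ | p.Prime ∧ (∃ e : ℕ, 1 ≤ e ∧ f (p ^ e) = 1) ∧
      Nat.Coprime p q ∧ alphaP q f p = α}.Finite := fun α => hcon α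
  obtain ⟨i₀, d, hi₀, hd, KID⟩ := kernel_rep hq hauto
  have hphi : 0 < q.totient := Nat.totient_pos.mpr (by omega)
  set R : ℕ := d + (q.totient + q) + 1 with hRdef
  set B : ℕ := i₀ + R * d with hBdef
  have hRB : R ≤ B := by
    have h1 : R ≤ R * d := Nat.le_mul_of_pos_right _ (by omega)
    omega
  have hB1 : 1 ≤ B := by omega
  set U : Set ℕ := {p : ℕ | p.Prime ∧ (∃ e : ℕ, 1 ≤ e ∧ f (p ^ e) = 1) ∧
      Nat.Coprime p q ∧ alphaP q f p ≤ B + R - 1} with hUdef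
  have hUfin : U.Finite := by
    have hsub : U ⊆ ⋃ α ∈ Finset.range (B + R), {p : ℕ | p.Prime ∧
        (∃ e : ℕ, 1 ≤ e ∧ f (p ^ e) = 1) ∧ Nat.Coprime p q ∧ alphaP q f p = α} := by
      rintro p ⟨h1, h2, h3, h4⟩
      simp only [Set.mem_iUnion, Finset.mem_range]
      exact ⟨alphaP q f p, by omega, h1, h2, h3, rfl⟩
    exact Set.Finite.subset (Set.Finite.biUnion (Finset.range (B + R)).finite_toSet
      (fun α _ => hfib α)) hsub
  set PF : Finset ℕ := hUfin.toFinset with hPFdef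
  set N : ℕ := ∏ l ∈ PF, l with hNdef
  have hPFmem : ∀ l ∈ PF, l.Prime ∧ Nat.Coprime l q := by
    intro l hl
    have h := hUfin.mem_toFinset.1 hl
    exact ⟨h.1, h.2.2.1⟩
  have hNpos : 0 < N := Finset.prod_pos (fun l hl => (hPFmem l hl).1.pos)
  have hNq : Nat.Coprime N q := Nat.Coprime.prod_left (fun l hl => (hPFmem l hl).2)
  set M : ℕ := q ^ i₀ * N with hMdef
  have hMpos : 0 < M := by positivity
  haveI : NeZero M := ⟨hMpos.ne'⟩
  set S : Set ℕ := {p : ℕ | p.Prime ∧ (∃ e : ℕ, 1 ≤ e ∧ f (p ^ e) = 1) ∧ Nat.Coprime p q}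
    with hSdef
  have hSinf : S.Infinite := by
    have hbad : {p : ℕ | p.Prime ∧ ¬ Nat.Coprime p q}.Finite := by
      apply (Set.finite_Iic q).subset
      rintro p ⟨hp, hnc⟩
      have hdq : p ∣ q := by
        by_contra hnd
        exact hnc ((Nat.Prime.coprime_iff_not_dvd hp).2 hnd)
      exact Nat.le_of_dvd (by omega) hdq
    apply Set.Infinite.mono (s := {p : ℕ | p.Prime ∧ ∃ e : ℕ, 1 ≤ e ∧ f (p ^ e) = 1}
      \ {p : ℕ | p.Prime ∧ ¬ Nat.Coprime p q})
    · rintro p ⟨⟨hp1, hp2⟩, hp3⟩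
      refine ⟨hp1, hp2, ?_⟩
      by_contra hnc
      exact hp3 ⟨hp1, hnc⟩
    · exact hinf.diff hbad
  set δf : ℕ → ℕ := fun p => if h : ∃ e : ℕ, 1 ≤ e ∧ f (p ^ e) = 1 then h.choose else 1
    with hdf
  have htfact : ∀ p : ℕ, (∃ e : ℕ, 1 ≤ e ∧ f (p ^ e) = 1) → 1 ≤ δf p ∧ f (p ^ δf p) = 1 := by
    intro p hp
    simp only [hdf, dif_pos hp]
    exact ⟨hp.choose_spec.1, hp.choose_spec.2⟩
  set S' : Set ℕ := S \ ↑PF with hS'def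
  have hS'inf : S'.Infinite := hSinf.diff PF.finite_toSet
  obtain ⟨b, hSb⟩ : ∃ b : ZMod M,
      {p : ℕ | p ∈ S' ∧ ((p ^ δf p : ℕ) : ZMod M) = b}.Infinite := by
    by_contra hfc
    push_neg at hfc
    apply hS'inf
    apply Set.Finite.subset (Set.finite_iUnion hfc)
    intro p hp
    exact Set.mem_iUnion.2 ⟨((p ^ δf p : ℕ) : ZMod M), hp, rfl⟩
  obtain ⟨p₀, hp₀⟩ := hSb.nonempty
  have hcopM : ∀ p, p ∈ S' → Nat.Coprime (p ^ δf p) M := by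
    intro p hp
    obtain ⟨⟨hpp, hpe, hpq⟩, hpnot⟩ := hp
    have h1 : Nat.Coprime p M := by
      apply Nat.Coprime.mul_right (hpq.pow_right _)
      apply Nat.Coprime.prod_right
      intro l hl
      have hlp := (hPFmem l hl).1
      have hne : p ≠ l := by
        rintro rfl
        exact hpnot (Finset.mem_coe.2 hl)
      exact (Nat.coprime_primes hpp hlp).2 hne
    exact h1.pow_left _
  obtain ⟨F, hFsub, hFcard⟩ := hSb.exists_subset_card_eq M.totient
  set T : ℕ := ∏ p ∈ F, p ^ δf p with hTdef
  have hFS : ∀ p ∈ F, p ∈ S := fun p hp => (hFsub hp).1.1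
  have hfT : f T = 1 := by
    have hgen : ∀ (G : Finset ℕ), ↑G ⊆ S → f (∏ p ∈ G, p ^ δf p) = 1 := by
      intro G
      induction G using Finset.induction_on with
      | empty => intro _; simpa using fone q f h01 hmul hinf
      | @insert a G₂ hnm ih =>
        intro hsub
        rw [Finset.prod_insert hnm]
        have haS : a ∈ S := hsub (Finset.mem_insert_self a G₂)
        have hGsub : ↑G₂ ⊆ S := fun x hx => hsub (Finset.mem_insert_of_mem hx)
        have hcop : Nat.Coprime (a ^ δf a) (∏ p ∈ G₂, p ^ δf p) := by
          apply Nat.Coprime.prod_right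
          intro l hl
          have hlS : l ∈ S := hGsub hl
          have hne : a ≠ l := fun h => hnm (h ▸ hl)
          exact Nat.Coprime.pow _ _ ((Nat.coprime_primes haS.1 hlS.1).2 hne)
        rw [hmul _ _ hcop, (htfact a haS.2.1).2, ih hGsub, one_mul]
    exact hgen F (fun p hp => hFS p hp)
  have hmodF : ∀ p ∈ F, (p ^ δf p) ≡ (p₀ ^ δf p₀) [MOD M] := by
    intro p hp
    have h1 : ((p ^ δf p : ℕ) : ZMod M) = ((p₀ ^ δf p₀ : ℕ) : ZMod M) := by
      rw [(hFsub hp).2, hp₀.2]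
    exact (ZMod.natCast_eq_natCast_iff _ _ _).1 h1
  have hprodmod : ∀ (G : Finset ℕ), (∀ p ∈ G, (p ^ δf p) ≡ (p₀ ^ δf p₀) [MOD M]) →
      (∏ p ∈ G, p ^ δf p) ≡ (p₀ ^ δf p₀) ^ G.card [MOD M] := by
    intro G
    induction G using Finset.induction_on with
    | empty =>
      intro _
      simp only [Finset.prod_empty, Finset.card_empty, pow_zero]
      exact Nat.ModEq.refl 1
    | @insert a G₂ hnm ih =>
      intro hmem
      rw [Finset.prod_insert hnm, Finset.card_insert_of_notMem hnm]
      have h1 := hmem a (Finset.mem_insert_self a G₂)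
      have h2 := ih (fun p hp => hmem p (Finset.mem_insert_of_mem hp))
      have h3 : (p₀ ^ δf p₀) * (p₀ ^ δf p₀) ^ G₂.card = (p₀ ^ δf p₀) ^ (G₂.card + 1) := by
        ring
      exact h3 ▸ (h1.mul h2)
  have hEuler : (p₀ ^ δf p₀) ^ M.totient ≡ 1 [MOD M] :=
    Nat.ModEq.pow_totient (hcopM p₀ hp₀.1)
  have hTmod : T ≡ 1 [MOD M] := by
    have h := hprodmod F hmodF
    rw [hFcard] at h
    exact h.trans hEuler
  have hFne : F.Nonempty := by
    rw [← Finset.card_pos, hFcard]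
    exact Nat.totient_pos.mpr hMpos
  obtain ⟨p₁, hp₁⟩ := hFne
  have hTpos : 0 < T := Finset.prod_pos (fun p hp => pow_pos ((hFS p hp).1.pos) _)
  have hT2 : 2 ≤ T := by
    have h1 : p₁ ^ δf p₁ ∣ T := Finset.dvd_prod_of_mem _ hp₁
    have hp₁S : p₁ ∈ S := hFS p₁ hp₁
    have h2 : 2 ≤ p₁ ^ δf p₁ := by
      calc 2 ≤ p₁ := hp₁S.1.two_le
        _ ≤ p₁ ^ δf p₁ := Nat.le_self_pow (by have := (htfact p₁ hp₁S.2.1).1; omega) _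
    exact le_trans h2 (Nat.le_of_dvd hTpos h1)
  have hMT : M ∣ T - 1 := (Nat.modEq_iff_dvd' (by omega)).1 hTmod.symm
  set bT : ℕ := Nat.findGreatest (fun a => q ^ a ∣ T - 1) T with hbTdef
  have hqi : q ^ i₀ ∣ T - 1 := dvd_trans (dvd_mul_right _ _) hMT
  have hT1pos : 0 < T - 1 := by omega
  have hqiLe : q ^ i₀ ≤ T - 1 := Nat.le_of_dvd hT1pos hqi
  have hi₀T : i₀ ≤ T := by
    have h1 := Nat.lt_pow_self (n := i₀) (show 1 < q by omega)
    omega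
  have hbspec : q ^ bT ∣ T - 1 :=
    Nat.findGreatest_spec (P := fun a => q ^ a ∣ T - 1) (Nat.zero_le T) (by simp)
  have hi₀bT : i₀ ≤ bT := Nat.le_findGreatest hi₀T hqi
  have hbT1T : bT + 1 ≤ T := by
    have h1 : q ^ bT ≤ T - 1 := Nat.le_of_dvd hT1pos hbspec
    have h2 := Nat.lt_pow_self (n := bT) (show 1 < q by omega)
    omega
  have hnb : ¬ q ^ (bT + 1) ∣ T - 1 :=
    (Nat.findGreatest_eq_iff.1 hbTdef.symm).2.2 (by omega) hbT1T
  set c : ℕ := (T - 1) / q ^ bT with hcdef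
  have hcT : T - 1 = q ^ bT * c := (Nat.mul_div_cancel' hbspec).symm
  have hcpos : 0 < c := by
    rcases Nat.eq_zero_or_pos c with h | h
    · rw [h, mul_zero] at hcT; omega
    · exact h
  have hqc : ¬ q ∣ c := by
    rintro ⟨c', hc'⟩
    apply hnb
    rw [hcT, hc']
    exact ⟨c', by ring⟩
  have hNT : N ∣ T - 1 := dvd_trans (dvd_mul_left N (q ^ i₀)) hMT
  have hNc : N ∣ c := by
    have h1 : N ∣ c * q ^ bT := by rw [mul_comm, ← hcT]; exact hNT
    exact Nat.Coprime.dvd_of_dvd_mul_right (hNq.pow_right _) h1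
  set e : ℕ := (bT - i₀) % d with hedef
  set Dq : ℕ := (bT - i₀) / d with hDqdef
  have he_lt : e < d := Nat.mod_lt _ (by omega)
  have hbe : bT = i₀ + Dq * d + e := by
    have h1 := Nat.div_add_mod (bT - i₀) d
    rw [← hDqdef, ← hedef] at h1
    have h2 : d * Dq = Dq * d := mul_comm _ _
    omega
  set m₀ : ℕ := q ^ e * c with hm₀def
  have hm₀pos : 0 < m₀ := by positivity
  have hTform : q ^ (i₀ + Dq * d) * m₀ + 1 = T := by
    have h3 : q ^ (i₀ + Dq * d) * m₀ = q ^ bT * c := by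
      rw [hm₀def, ← mul_assoc, ← pow_add, hbe]
    omega
  have hfm : f (q ^ i₀ * m₀ + 1) = 1 := by
    rw [← KID Dq m₀, hTform]
    exact hfT
  set Y : ℕ := q ^ B * m₀ + 1 with hYdef
  have hfY : f Y = 1 := by
    have h := KID R m₀
    rw [hfm] at h
    rw [hYdef, hBdef]
    exact h
  have hYq : Nat.Coprime Y q := by
    obtain ⟨B', hB'⟩ : ∃ B', B = B' + 1 := ⟨B - 1, by omega⟩
    have h1 : Y = 1 + (q ^ B' * m₀) * q := by
      rw [hYdef, hB', pow_succ]; ring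
    rw [h1]
    exact (Nat.coprime_add_mul_right_left 1 q (q ^ B' * m₀)).2 (Nat.coprime_one_left q)
  have hnotY : ¬ q ^ (B + R) ∣ Y ^ q.totient - 1 := by
    obtain ⟨E, hE⟩ := one_add_pow (q ^ B * m₀) q.totient
    have hYpow : Y ^ q.totient - 1 = q ^ B * (q.totient * m₀ + q ^ B * (m₀ ^ 2 * E)) := by
      have h1 : Y ^ q.totient = 1 + q.totient * (q ^ B * m₀) + (q ^ B * m₀) ^ 2 * E := by
        rw [hYdef, show q ^ B * m₀ + 1 = 1 + q ^ B * m₀ by ring]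
        exact hE
      rw [h1, show 1 + q.totient * (q ^ B * m₀) + (q ^ B * m₀) ^ 2 * E
          = 1 + q ^ B * (q.totient * m₀ + q ^ B * (m₀ ^ 2 * E)) by ring,
        Nat.add_sub_cancel_left]
    intro hdvd
    rw [hYpow, pow_add] at hdvd
    have h3 : q ^ R ∣ q.totient * m₀ + q ^ B * (m₀ ^ 2 * E) :=
      (Nat.mul_dvd_mul_iff_left (pow_pos (show 0 < q by omega) B)).1 hdvd
    have h4 : q ^ R ∣ q ^ B * (m₀ ^ 2 * E) :=
      dvd_mul_of_dvd_left (pow_dvd_pow q hRB) _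
    have h5 : q ^ R ∣ q.totient * m₀ := by
      have h6 := Nat.dvd_sub h3 h4
      rwa [Nat.add_sub_cancel] at h6
    have h6 : q.totient * m₀ = q ^ e * (q.totient * c) := by rw [hm₀def]; ring
    rw [h6] at h5
    have h7 : q ^ (R - e) ∣ q.totient * c := by
      have h8 : q ^ R = q ^ e * q ^ (R - e) := by rw [← pow_add]; congr 1; omega
      rw [h8] at h5
      exact (Nat.mul_dvd_mul_iff_left (pow_pos (show 0 < q by omega) e)).1 h5
    have h9 : q ^ (q.totient + q + 2) ∣ q.totient * c :=
      dvd_trans (pow_dvd_pow q (by omega)) h7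
    exact totient_mul_not_dvd hq hcpos hqc h9
  obtain ⟨l, v, hlp, hlY, hv1, hfv, hnd⟩ := extract q f h01 hmul (B + R) Y hYq hfY hnotY
  have hlq : Nat.Coprime l q := Nat.Coprime.coprime_dvd_left hlY hYq
  have hlv2 : 2 ≤ l ^ (v * q.totient) := by
    calc 2 ≤ l := hlp.two_le
      _ = l ^ 1 := (pow_one l).symm
      _ ≤ l ^ (v * q.totient) := Nat.pow_le_pow_right hlp.pos (by
          have := Nat.mul_pos hv1 hphi; omega)
  have hXpos : 0 < l ^ (v * q.totient) - 1 := by omega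
  set a : ℕ := Nat.findGreatest (fun a => q ^ a ∣ l ^ (v * q.totient) - 1)
    (l ^ (v * q.totient)) with hadef
  have haspec : q ^ a ∣ l ^ (v * q.totient) - 1 :=
    Nat.findGreatest_spec (P := fun a => q ^ a ∣ l ^ (v * q.totient) - 1)
      (Nat.zero_le _) (by simp)
  have ha1T : a + 1 ≤ l ^ (v * q.totient) := by
    have h1 : q ^ a ≤ l ^ (v * q.totient) - 1 := Nat.le_of_dvd hXpos haspec
    have h2 := Nat.lt_pow_self (n := a) (show 1 < q by omega)
    omega
  have hna : ¬ q ^ (a + 1) ∣ l ^ (v * q.totient) - 1 :=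
    (Nat.findGreatest_eq_iff.1 hadef.symm).2.2 (by omega) ha1T
  have haB : a ≤ B + R - 1 := by
    by_contra hcon2
    push_neg at hcon2
    exact hnd (dvd_trans (pow_dvd_pow q (by omega)) haspec)
  have hmema : alphaP q f l ≤ a := by
    apply Nat.sInf_le
    exact ⟨v, hv1, hfv, haspec, hna⟩
  have hlU : l ∈ U := ⟨hlp, ⟨v, hv1, hfv⟩, hlq, le_trans hmema haB⟩
  have hlPF : l ∈ PF := hUfin.mem_toFinset.2 hlU
  have hlN : l ∣ N := Finset.dvd_prod_of_mem _ hlPF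
  have hlm₀ : l ∣ q ^ B * m₀ := by
    have h1 : l ∣ m₀ := by
      rw [hm₀def]
      exact dvd_trans (dvd_trans hlN hNc) (dvd_mul_left c (q ^ e))
    exact Dvd.dvd.mul_left h1 _
  have hl1 : l ∣ 1 := by
    have h2 : l ∣ q ^ B * m₀ + 1 := by rw [← hYdef]; exact hlY
    exact (Nat.dvd_add_right hlm₀).1 h2
  have := hlp.two_le
  have := Nat.le_of_dvd one_pos hl1
  omega
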